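/- arXiv:2009.13709 — 4 statements merged into one kernel-verified Lean document; each statement's English description precedes it below -/
import Mathlib

section
/- Let z ≥ 1, r ≥ 1 and g ≥ 3 be integers and let G be a [z,r;g]-mixed cage. Then G is strongly connected: for every two vertices u and v of G there exists a walk from u to v (traversing edges in either direction and arcs from tail to head) and a walk from v to u. -/
/-- A mixed graph: a simple undirected graph together with a loopless arc
relation on the same vertex set, such that no pair of vertices joined by an
edge is also joined by an arc in either direction. -/
structure MixedGraph (V : Type) where
  edge : SimpleGraph V
  arc : V → V → Prop
  arc_irrefl : ∀ v, ¬ arc v v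
  no_overlap : ∀ u v, edge.Adj u v → ¬ arc u v ∧ ¬ arc v u

namespace MixedGraph

variable {V : Type}

/-- A single step of a walk in a mixed graph: traverse an edge (in either
direction, since `edge.Adj` is symmetric) or an arc from tail to head. -/
def Step (M : MixedGraph V) (u v : V) : Prop :=
  M.edge.Adj u v ∨ M.arc u v

/-- `M` has a cycle of length `n`: a cyclic sequence of `n ≥ 3` pairwise
distinct vertices, each consecutive pair joined by a step. -/
def HasCycleOfLength (M : MixedGraph V) (n : ℕ) : Prop :=
  3 ≤ n ∧ ∃ c : ZMod n → V, Function.Injective c ∧ ∀ i, M.Step (c i) (c (i + 1))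

/-- `M` has girth `g`: it has a cycle of length `g` and no shorter cycle. -/
def HasGirth (M : MixedGraph V) (g : ℕ) : Prop :=
  M.HasCycleOfLength g ∧ ∀ n, M.HasCycleOfLength n → g ≤ n

/-- `M` is a `[z,r;g]`-mixed graph: every vertex has out-degree `z` and
in-degree `z` in the arc relation, degree `r` in the undirected graph, and
the girth of `M` is `g`. -/
def IsMixed (M : MixedGraph V) (z r g : ℕ) : Prop :=
  (∀ v, Nat.card {w // M.arc v w} = z) ∧
  (∀ v, Nat.card {w // M.arc w v} = z) ∧
  (∀ v, Nat.card {w // M.edge.Adj v w} = r) ∧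
  M.HasGirth g

/-- A `[z,r;g]`-mixed cage: a finite `[z,r;g]`-mixed graph of minimum order. -/
def IsCage (M : MixedGraph V) (z r g : ℕ) : Prop :=
  Finite V ∧ M.IsMixed z r g ∧
    ∀ (n : ℕ) (M' : MixedGraph (Fin n)), M'.IsMixed z r g → Nat.card V ≤ n

end MixedGraph

/-- `n[z,r;g]`: the minimum order of a `[z,r;g]`-mixed graph. -/
noncomputable def mixedCageNum (z r g : ℕ) : ℕ :=
  sInf {n : ℕ | ∃ M : MixedGraph (Fin n), M.IsMixed z r g}


open Finset in
private lemma closedOut {V : Type} [Fintype V] (arc : V → V → Prop) (z : ℕ)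
    (hout : ∀ v, Nat.card {w // arc v w} = z)
    (hin : ∀ v, Nat.card {w // arc w v} = z)
    (P : V → Prop)
    (hP : ∀ y, P y → ∀ x, arc x y → P x) :
    ∀ x, P x → ∀ y, arc x y → P y := by
  classical
  have hout' : ∀ v, (univ.filter fun w => arc v w).card = z := by
    intro v; rw [← Fintype.card_subtype, ← Nat.card_eq_fintype_card]; exact hout v
  have hin' : ∀ v, (univ.filter fun w => arc w v).card = z := by
    intro v; rw [← Fintype.card_subtype, ← Nat.card_eq_fintype_card]; exact hin v
  set S : Finset V := univ.filter P with hSdef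
  have hmemS : ∀ x, x ∈ S ↔ P x := by intro x; simp [hSdef]
  have hinS : ∀ y ∈ S, (S.filter fun x => arc x y) = univ.filter fun x => arc x y := by
    intro y hy
    refine Finset.Subset.antisymm (filter_subset_filter _ (subset_univ S)) ?_
    intro x hx
    rw [mem_filter] at hx ⊢
    exact ⟨(hmemS x).2 (hP y ((hmemS y).1 hy) x hx.2), hx.2⟩
  have swap : (∑ x ∈ S, (S.filter fun y => arc x y).card)
      = ∑ y ∈ S, (S.filter fun x => arc x y).card := by
    simp_rw [Finset.card_filter]
    exact Finset.sum_comm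
  have hrhs : (∑ y ∈ S, (S.filter fun x => arc x y).card) = S.card * z := by
    rw [Finset.sum_congr rfl fun y hy => by rw [hinS y hy, hin' y]]
    simp [Finset.sum_const, mul_comm]
  have hle : ∀ x ∈ S, (S.filter fun y => arc x y).card ≤ z := by
    intro x _
    calc (S.filter fun y => arc x y).card
        ≤ (univ.filter fun y => arc x y).card :=
          Finset.card_le_card (filter_subset_filter _ (subset_univ S))
      _ = z := hout' x
  have heach : ∀ x ∈ S, (S.filter fun y => arc x y).card = z := by
    by_contra h
    push_neg at h
    obtain ⟨x, hx, hne⟩ := h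
    have hlt : (∑ x ∈ S, (S.filter fun y => arc x y).card) < ∑ _x ∈ S, z :=
      Finset.sum_lt_sum hle ⟨x, hx, lt_of_le_of_ne (hle x hx) hne⟩
    rw [swap, hrhs] at hlt
    simp [Finset.sum_const, mul_comm] at hlt
  intro x hx y hxy
  have hx' : x ∈ S := (hmemS x).2 hx
  have heq : S.filter (fun y => arc x y) = univ.filter (fun y => arc x y) :=
    Finset.eq_of_subset_of_card_le (filter_subset_filter _ (subset_univ S))
      (by rw [heach x hx', hout' x])
  have : y ∈ S.filter (fun y => arc x y) := by
    rw [heq, mem_filter]; exact ⟨mem_univ y, hxy⟩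
  exact (hmemS y).1 (Finset.mem_of_mem_filter y this)

private def mgComap {V W : Type} (M : MixedGraph V) (f : W → V) : MixedGraph W where
  edge := M.edge.comap f
  arc a b := M.arc (f a) (f b)
  arc_irrefl a := M.arc_irrefl (f a)
  no_overlap a b h := M.no_overlap (f a) (f b) h

private lemma mgComap_step {V W : Type} (M : MixedGraph V) (f : W → V) (a b : W) :
    (mgComap M f).Step a b ↔ M.Step (f a) (f b) := Iff.rfl

private def subtypeArcEquiv {V : Type} (P p : V → Prop) (h : ∀ w, p w → P w) :
    {w : Subtype P // p w.1} ≃ {w : V // p w} where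
  toFun a := ⟨a.1.1, a.2⟩
  invFun w := ⟨⟨w.1, h w.1 w.2⟩, w.2⟩
  left_inv a := rfl
  right_inv w := rfl

private lemma cycleSame {V : Type} {g : ℕ} [NeZero g] (M : MixedGraph V)
    (P : V → Prop) (hstep : ∀ x y, M.Step x y → (P x ↔ P y))
    (c : ZMod g → V) (hcstep : ∀ i, M.Step (c i) (c (i + 1))) :
    ∀ i : ZMod g, P (c i) ↔ P (c 0) := by
  have key : ∀ (n : ℕ), P (c ((n : ZMod g))) ↔ P (c 0) := by
    intro n
    induction n with
    | zero => simp
    | succ m ih =>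
      have h := hstep _ _ (hcstep (m : ZMod g))
      push_cast
      exact h.symm.trans ih
  intro i
  have hi : i = ((i.val : ℕ) : ZMod g) := by simp [ZMod.natCast_val, ZMod.cast_id]
  rw [hi]; exact key i.val

private lemma restrictContradiction {V : Type} [Fintype V] (M : MixedGraph V)
    (z r g : ℕ)
    (hout : ∀ v, Nat.card {w // M.arc v w} = z)
    (hin : ∀ v, Nat.card {w // M.arc w v} = z)
    (hdeg : ∀ v, Nat.card {w // M.edge.Adj v w} = r)
    (hgmin : ∀ n, M.HasCycleOfLength n → g ≤ n)
    (hmin : ∀ (n : ℕ) (M' : MixedGraph (Fin n)), M'.IsMixed z r g → Nat.card V ≤ n)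
    (P : V → Prop)
    (hstep : ∀ x y, M.Step x y → (P x ↔ P y))
    (hg3 : 3 ≤ g) (c : ZMod g → V) (hcinj : Function.Injective c)
    (hcstep : ∀ i, M.Step (c i) (c (i + 1)))
    (hcycP : ∀ i, P (c i))
    (x₀ : V) (hx₀ : ¬ P x₀) : False := by
  classical
  set W := Subtype P with hW
  set n := Nat.card W with hn
  set e : W ≃ Fin n := Finite.equivFin W with he
  set f : Fin n → V := fun i => (e.symm i).val with hf
  have hfinj : Function.Injective f := fun a b h => e.symm.injective (Subtype.val_injective h)
  have hPf : ∀ v : Fin n, P (f v) := fun v => (e.symm v).2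
  set M' : MixedGraph (Fin n) := mgComap M f with hM'
  have hout' : ∀ v : Fin n, Nat.card {w // M'.arc v w} = z := by
    intro v
    have e1 : {w : Fin n // M.arc (f v) (f w)} ≃ {w : W // M.arc (f v) w.val} :=
      e.symm.subtypeEquiv fun a => Iff.rfl
    have e2 : {w : W // M.arc (f v) w.val} ≃ {w : V // M.arc (f v) w} :=
      subtypeArcEquiv _ _ (fun w hw => (hstep (f v) w (Or.inr hw)).mp (hPf v))
    rw [show {w // M'.arc v w} = {w : Fin n // M.arc (f v) (f w)} from rfl,
      Nat.card_congr (e1.trans e2)]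
    exact hout (f v)
  have hin' : ∀ v : Fin n, Nat.card {w // M'.arc w v} = z := by
    intro v
    have e1 : {w : Fin n // M.arc (f w) (f v)} ≃ {w : W // M.arc w.val (f v)} :=
      e.symm.subtypeEquiv fun a => Iff.rfl
    have e2 : {w : W // M.arc w.val (f v)} ≃ {w : V // M.arc w (f v)} :=
      subtypeArcEquiv _ _ (fun w hw => (hstep w (f v) (Or.inr hw)).mpr (hPf v))
    rw [show {w // M'.arc w v} = {w : Fin n // M.arc (f w) (f v)} from rfl,
      Nat.card_congr (e1.trans e2)]
    exact hin (f v)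
  have hdeg' : ∀ v : Fin n, Nat.card {w // M'.edge.Adj v w} = r := by
    intro v
    have e1 : {w : Fin n // M.edge.Adj (f v) (f w)} ≃ {w : W // M.edge.Adj (f v) w.val} :=
      e.symm.subtypeEquiv fun a => Iff.rfl
    have e2 : {w : W // M.edge.Adj (f v) w.val} ≃ {w : V // M.edge.Adj (f v) w} :=
      subtypeArcEquiv _ _ (fun w hw => (hstep (f v) w (Or.inl hw)).mp (hPf v))
    rw [show {w // M'.edge.Adj v w} = {w : Fin n // M.edge.Adj (f v) (f w)} from rfl,
      Nat.card_congr (e1.trans e2)]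
    exact hdeg (f v)
  have hcyc' : M'.HasCycleOfLength g := by
    refine ⟨hg3, fun i => e ⟨c i, hcycP i⟩, ?_, ?_⟩
    · intro i j h
      exact hcinj (congrArg Subtype.val (e.injective h))
    · intro i
      rw [mgComap_step]
      have h1 : f (e ⟨c i, hcycP i⟩) = c i := by
        simp [hf, Equiv.symm_apply_apply]
      have h2 : f (e ⟨c (i + 1), hcycP (i + 1)⟩) = c (i + 1) := by
        simp [hf, Equiv.symm_apply_apply]
      rw [h1, h2]
      exact hcstep i
  have hgmin' : ∀ m, M'.HasCycleOfLength m → g ≤ m := by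
    rintro m ⟨h3, d, dinj, dstep⟩
    exact hgmin m ⟨h3, fun i => f (d i), hfinj.comp dinj, fun i => dstep i⟩
  have hisM : M'.IsMixed z r g := ⟨hout', hin', hdeg', hcyc', hgmin'⟩
  have hle : Nat.card V ≤ n := hmin n M' hisM
  have hlt : n < Nat.card V := by
    rw [hn, Nat.card_eq_fintype_card, Nat.card_eq_fintype_card]
    exact Fintype.card_subtype_lt hx₀
  omega


/-- Every `[z,r;g]`-mixed cage is strongly connected: between any two vertices
there is a walk traversing edges in either direction and arcs from tail to
head. -/
theorem stmt_2 {V : Type} (z r g : ℕ) (hz : 1 ≤ z) (hr : 1 ≤ r) (hg : 3 ≤ g)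
    (M : MixedGraph V) (hM : M.IsCage z r g) :
    ∀ u v : V, Relation.ReflTransGen M.Step u v := by
  classical
  obtain ⟨hfin, ⟨hout, hin, hdeg, hgcyc, hgmin⟩, hmin⟩ := hM
  haveI : Fintype V := Fintype.ofFinite V
  by_contra hcon
  push_neg at hcon
  obtain ⟨u₀, v₀, hnr⟩ := hcon
  set P₀ : V → Prop := fun x => Relation.ReflTransGen M.Step x v₀ with hP₀
  have hP₀v : P₀ v₀ := Relation.ReflTransGen.refl
  have hinc : ∀ y, P₀ y → ∀ x, M.arc x y → P₀ x :=
    fun y hy x hxy => Relation.ReflTransGen.head (Or.inr hxy) hy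
  have harc_out : ∀ x, P₀ x → ∀ y, M.arc x y → P₀ y :=
    closedOut M.arc z hout hin P₀ hinc
  have hstep₀ : ∀ x y, M.Step x y → (P₀ x ↔ P₀ y) := by
    intro x y hs
    constructor
    · intro hx
      rcases hs with h | h
      · exact Relation.ReflTransGen.head (Or.inl h.symm) hx
      · exact harc_out x hx y h
    · intro hy
      exact Relation.ReflTransGen.head hs hy
  obtain ⟨hg3, c, hcinj, hcstep⟩ := hgcyc
  haveI : NeZero g := ⟨by omega⟩
  have hsame := cycleSame M P₀ hstep₀ c hcstep
  by_cases hc0 : P₀ (c 0)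
  · exact restrictContradiction M z r g hout hin hdeg hgmin hmin P₀ hstep₀ hg3 c hcinj
      hcstep (fun i => (hsame i).mpr hc0) u₀ hnr
  · exact restrictContradiction M z r g hout hin hdeg hgmin hmin (fun x => ¬ P₀ x)
      (fun x y hs => not_congr (hstep₀ x y hs)) hg3 c hcinj hcstep
      (fun i => fun h => hc0 ((hsame i).mp h)) v₀ (fun h => h hP₀v)
end

section
/- Let z be a positive integer with z ≠ 2, and let p be the smallest prime number satisfying 4z+1 ≤ p ≤ 5z. Then for every integer r with 1 ≤ r ≤ p, there exists a [z,r;5]-mixed graph of order 2pr; in particular n[z,r;5] ≤ 2pr. -/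
section MC
variable {p z r : ℕ}

/-- Vertex set: two sides, a position in `ZMod p`, a line index in `Fin r`. -/
abbrev MCV (p r : ℕ) := Bool × ZMod p × Fin r

/-- The `j`-th edge-neighbor of a vertex. -/
def mcNbr (v : MCV p r) (j : Fin r) : MCV p r :=
  if v.1 = false then (true, v.2.1 + ((v.2.2 : ℕ) : ZMod p) * ((j : ℕ) : ZMod p), j)
  else (false, v.2.1 - ((j : ℕ) : ZMod p) * ((v.2.2 : ℕ) : ZMod p), j)

def mcAdj (u v : MCV p r) : Prop :=
  (u.1 = false ∧ v.1 = true ∧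
    v.2.1 = u.2.1 + ((u.2.2 : ℕ) : ZMod p) * ((v.2.2 : ℕ) : ZMod p)) ∨
  (u.1 = true ∧ v.1 = false ∧
    u.2.1 = v.2.1 + ((v.2.2 : ℕ) : ZMod p) * ((u.2.2 : ℕ) : ZMod p))

def mcArcNbr (z : ℕ) (v : MCV p r) (k : Fin z) : MCV p r :=
  (v.1, v.2.1 + (((k : ℕ) + 1 : ℕ) : ZMod p), v.2.2)

def mcArc (z : ℕ) (u v : MCV p r) : Prop := ∃ k : Fin z, v = mcArcNbr z u k

lemma castInj {a b : ℕ} (ha : a < p) (hb : b < p)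
    (h : (a : ZMod p) = b) : a = b := by
  rw [← ZMod.val_cast_of_lt ha, ← ZMod.val_cast_of_lt hb, h]

lemma castNZ {m : ℕ} (h1 : 1 ≤ m) (h2 : m < p) : (m : ZMod p) ≠ 0 := by
  intro h
  rw [ZMod.natCast_eq_zero_iff] at h
  exact absurd (Nat.le_of_dvd (by omega) h) (by omega)

lemma iotaInj (hrp : r ≤ p) {i j : Fin r}
    (h : ((i : ℕ) : ZMod p) = ((j : ℕ) : ZMod p)) : i = j :=
  Fin.ext (castInj (lt_of_lt_of_le i.isLt hrp) (lt_of_lt_of_le j.isLt hrp) h)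

lemma mcAdj_symm {u v : MCV p r} (h : mcAdj u v) : mcAdj v u := by
  rcases h with ⟨h1, h2, h3⟩ | ⟨h1, h2, h3⟩
  · exact Or.inr ⟨h2, h1, h3⟩
  · exact Or.inl ⟨h2, h1, h3⟩

lemma mcAdj_side {u v : MCV p r} (h : mcAdj u v) : v.1 = !u.1 := by
  rcases h with ⟨h1, h2, _⟩ | ⟨h1, h2, _⟩ <;> rw [h1, h2] <;> rfl

lemma mcAdj_irrefl (v : MCV p r) : ¬ mcAdj v v := by
  intro h; have := mcAdj_side h; simp at this

lemma mcArc_side {u v : MCV p r} (h : mcArc z u v) : v.1 = u.1 := by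
  obtain ⟨k, rfl⟩ := h; rfl

lemma mcArc_line {u v : MCV p r} (h : mcArc z u v) : v.2.2 = u.2.2 := by
  obtain ⟨k, rfl⟩ := h; rfl

lemma mcArc_pos {u v : MCV p r} (h : mcArc z u v) :
    ∃ a : ℕ, 1 ≤ a ∧ a ≤ z ∧ v.2.1 = u.2.1 + (a : ZMod p) := by
  obtain ⟨k, rfl⟩ := h
  exact ⟨(k : ℕ) + 1, by omega, by have := k.isLt; omega, rfl⟩

lemma mcArc_irrefl (hzp : z < p) (v : MCV p r) : ¬ mcArc z v v := by
  intro h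
  obtain ⟨a, h1, h2, h3⟩ := mcArc_pos h
  have hap : a < p := by omega
  exact castNZ h1 hap (by linear_combination -h3)

/-- Two edges from a common vertex to vertices with the same line index
coincide. -/
lemma mcEdge_eq {v u w : MCV p r} (h1 : mcAdj v u) (h2 : mcAdj v w)
    (h3 : u.2.2 = w.2.2) : u = w := by
  obtain ⟨ub, ux, ui⟩ := u; obtain ⟨wb, wx, wi⟩ := w; obtain ⟨vb, vx, vi⟩ := v
  simp only at h3; subst h3
  rcases h1 with ⟨e1, e2, e3⟩ | ⟨e1, e2, e3⟩ <;>
    rcases h2 with ⟨f1, f2, f3⟩ | ⟨f1, f2, f3⟩ <;>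
      dsimp only at e1 e2 e3 f1 f2 f3
  · refine Prod.ext (e2.trans f2.symm) (Prod.ext ?_ rfl)
    show ux = wx
    rw [e3, f3]
  · exact absurd (e1.symm.trans f1) (by simp)
  · exact absurd (e1.symm.trans f1) (by simp)
  · refine Prod.ext (e2.trans f2.symm) (Prod.ext ?_ rfl)
    show ux = wx
    linear_combination f3 - e3

lemma mcC4 (hp : p.Prime) (hrp : r ≤ p) {a b c d : MCV p r}
    (h1 : mcAdj a b) (h2 : mcAdj b c) (h3 : mcAdj c d) (h4 : mcAdj d a) :
    a = c ∨ b = d := by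
  by_cases hac : a.2.2 = c.2.2
  · exact Or.inl (mcEdge_eq (mcAdj_symm h1) h2 hac)
  by_cases hbd : b.2.2 = d.2.2
  · exact Or.inr (mcEdge_eq (mcAdj_symm h2) h3 hbd)
  exfalso
  obtain ⟨ab', ax, ai⟩ := a; obtain ⟨bb, bx, bi⟩ := b
  obtain ⟨cb, cx, ci⟩ := c; obtain ⟨db, dx, di⟩ := d
  dsimp only at hac hbd
  rcases h1 with ⟨s1, s2, e1⟩ | ⟨s1, s2, e1⟩ <;>
    rcases h2 with ⟨s3, s4, e2⟩ | ⟨s3, s4, e2⟩ <;>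
      rcases h3 with ⟨s5, s6, e3⟩ | ⟨s5, s6, e3⟩ <;>
        rcases h4 with ⟨s7, s8, e4⟩ | ⟨s7, s8, e4⟩ <;>
          dsimp only at s1 s2 s3 s4 s5 s6 s7 s8 e1 e2 e3 e4 <;>
            simp_all only [Bool.true_eq_false, Bool.false_eq_true]
  · have key : (((ai : ℕ) : ZMod p) - ((ci : ℕ) : ZMod p)) *
        (((bi : ℕ) : ZMod p) - ((di : ℕ) : ZMod p)) = 0 := by
      linear_combination -e1 - e3
    haveI : Fact p.Prime := ⟨hp⟩
    rcases mul_eq_zero.mp key with h | h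
    · exact hac (iotaInj hrp (by linear_combination h))
    · exact hbd (iotaInj hrp (by linear_combination h))
  · have key : (((bi : ℕ) : ZMod p) - ((di : ℕ) : ZMod p)) *
        (((ai : ℕ) : ZMod p) - ((ci : ℕ) : ZMod p)) = 0 := by
      linear_combination e2 - e1
    haveI : Fact p.Prime := ⟨hp⟩
    rcases mul_eq_zero.mp key with h | h
    · exact hbd (iotaInj hrp (by linear_combination h))
    · exact hac (iotaInj hrp (by linear_combination h))

lemma mcOpp {a b c d : MCV p r} (h1 : mcAdj a b) (h2 : mcAdj c d)
    (hl1 : a.2.2 = d.2.2) (hl2 : b.2.2 = c.2.2) (hs : a.1 = d.1) :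
    c.2.1 - b.2.1 = d.2.1 - a.2.1 := by
  obtain ⟨ab', ax, ai⟩ := a; obtain ⟨bb, bx, bi⟩ := b
  obtain ⟨cb, cx, ci⟩ := c; obtain ⟨db, dx, di⟩ := d
  dsimp only at hl1 hl2 hs ⊢
  subst hl1; subst hl2
  rcases h1 with ⟨s1, s2, e1⟩ | ⟨s1, s2, e1⟩ <;>
    rcases h2 with ⟨s3, s4, e2⟩ | ⟨s3, s4, e2⟩ <;>
      dsimp only at s1 s2 s3 s4 e1 e2
  · rw [s1] at hs; rw [s4] at hs; exact Bool.noConfusion hs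
  · linear_combination e2 - e1
  · linear_combination e1 - e2
  · rw [s1] at hs; rw [s4] at hs; exact Bool.noConfusion hs

/-- The mixed graph. -/
def mcM (z : ℕ) (hzp : z < p) : MixedGraph (MCV p r) where
  edge := ⟨mcAdj, ⟨fun _ _ h => mcAdj_symm h⟩, ⟨fun v h => mcAdj_irrefl v h⟩⟩
  arc := mcArc z
  arc_irrefl := fun v h => mcArc_irrefl hzp v h
  no_overlap := fun u v h => by
    constructor
    · intro ha
      have h1 := mcAdj_side h
      have h2 := mcArc_side ha
      rw [h2] at h1; simp at h1
    · intro ha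
      have h1 := mcAdj_side h
      have h2 := mcArc_side ha
      rw [h1] at h2; simp at h2

lemma mc_no3 (hp : p.Prime) (hz : 1 ≤ z) (h4 : 4 * z < p) (hrp : r ≤ p)
    (hzp : z < p) (c : ZMod 3 → MCV p r) (hinj : Function.Injective c)
    (hstep : ∀ i, (mcM z hzp (r := r)).Step (c i) (c (i + 1))) : False := by
  have h0 := hstep 0; have h1 := hstep 1; have h2 := hstep 2
  rw [show (0 : ZMod 3) + 1 = 1 by decide] at h0
  rw [show (1 : ZMod 3) + 1 = 2 by decide] at h1
  rw [show (2 : ZMod 3) + 1 = 0 by decide] at h2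
  obtain h0 | h0 := h0 <;> obtain h1 | h1 := h1 <;> obtain h2 | h2 := h2
  · -- EEE: parity
    have hh := mcAdj_side h2
    rw [mcAdj_side h1, mcAdj_side h0] at hh
    simp at hh
  · -- EEA
    exact absurd (hinj (mcEdge_eq (mcAdj_symm h0) h1 (mcArc_line h2)))
      (by decide)
  · -- EAE
    exact absurd (hinj (mcEdge_eq h0 (mcAdj_symm h2) (mcArc_line h1).symm))
      (by decide)
  · -- EAA: parity
    have hh := mcArc_side h2
    rw [mcArc_side h1, mcAdj_side h0] at hh
    simp at hh
  · -- AEE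
    exact absurd (hinj (mcEdge_eq (mcAdj_symm h1) h2 (mcArc_line h0)))
      (by decide)
  · -- AEA: parity
    have hh := mcArc_side h2
    rw [mcAdj_side h1, mcArc_side h0] at hh
    simp at hh
  · -- AAE: parity
    have hh := mcAdj_side h2
    rw [mcArc_side h1, mcArc_side h0] at hh
    simp at hh
  · -- AAA: sum
    obtain ⟨a1, ha1, ha1', e1⟩ := mcArc_pos h0
    obtain ⟨a2, ha2, ha2', e2⟩ := mcArc_pos h1
    obtain ⟨a3, ha3, ha3', e3⟩ := mcArc_pos h2
    have key : ((a1 + a2 + a3 : ℕ) : ZMod p) = 0 := by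
      push_cast
      linear_combination -e1 - e2 - e3
    exact castNZ (by omega) (by omega) key

lemma mc_no4 (hp : p.Prime) (hz : 1 ≤ z) (h4 : 4 * z < p) (hrp : r ≤ p)
    (hzp : z < p) (c : ZMod 4 → MCV p r) (hinj : Function.Injective c)
    (hstep : ∀ i, (mcM z hzp (r := r)).Step (c i) (c (i + 1))) : False := by
  have h0 := hstep 0; have h1 := hstep 1; have h2 := hstep 2; have h3 := hstep 3
  rw [show (0 : ZMod 4) + 1 = 1 by decide] at h0
  rw [show (1 : ZMod 4) + 1 = 2 by decide] at h1
  rw [show (2 : ZMod 4) + 1 = 3 by decide] at h2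
  rw [show (3 : ZMod 4) + 1 = 0 by decide] at h3
  obtain h0 | h0 := h0 <;> obtain h1 | h1 := h1 <;> obtain h2 | h2 := h2 <;>
    obtain h3 | h3 := h3
  · -- EEEE
    rcases mcC4 hp hrp h0 h1 h2 h3 with h | h
    · exact absurd (hinj h) (by decide)
    · exact absurd (hinj h) (by decide)
  · -- EEEA: parity
    have hh := mcArc_side h3
    rw [mcAdj_side h2, mcAdj_side h1, mcAdj_side h0] at hh
    simp at hh
  · -- EEAE: parity
    have hh := mcAdj_side h3
    rw [mcArc_side h2, mcAdj_side h1, mcAdj_side h0] at hh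
    simp at hh
  · -- EEAA
    exact absurd (hinj (mcEdge_eq (mcAdj_symm h0) h1
      ((mcArc_line h3).trans (mcArc_line h2)))) (by decide)
  · -- EAEE: parity
    have hh := mcAdj_side h3
    rw [mcAdj_side h2, mcArc_side h1, mcAdj_side h0] at hh
    simp at hh
  · -- EAEA
    have hopp := mcOpp h0 h2 (mcArc_line h3) (mcArc_line h1).symm
      (mcArc_side h3)
    obtain ⟨a1, ha1, ha1', e1⟩ := mcArc_pos h1
    obtain ⟨a3, ha3, ha3', e3⟩ := mcArc_pos h3
    have key : ((a1 + a3 : ℕ) : ZMod p) = 0 := by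
      push_cast
      linear_combination hopp - e1 - e3
    exact castNZ (by omega) (by omega) key
  · -- EAAE
    exact absurd (hinj (mcEdge_eq h0 (mcAdj_symm h3)
      ((mcArc_line h2).trans (mcArc_line h1)).symm)) (by decide)
  · -- EAAA: parity
    have hh := mcArc_side h3
    rw [mcArc_side h2, mcArc_side h1, mcAdj_side h0] at hh
    simp at hh
  · -- AEEE: parity
    have hh := mcAdj_side h3
    rw [mcAdj_side h2, mcAdj_side h1, mcArc_side h0] at hh
    simp at hh
  · -- AEEA
    exact absurd (hinj (mcEdge_eq (mcAdj_symm h1) h2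
      ((mcArc_line h0).trans (mcArc_line h3)))) (by decide)
  · -- AEAE
    have hopp := mcOpp h3 h1 (mcArc_line h2) (mcArc_line h0).symm
      (mcArc_side h2)
    obtain ⟨a0, ha0, ha0', e0⟩ := mcArc_pos h0
    obtain ⟨a2, ha2, ha2', e2⟩ := mcArc_pos h2
    have key : ((a0 + a2 : ℕ) : ZMod p) = 0 := by
      push_cast
      linear_combination hopp - e0 - e2
    exact castNZ (by omega) (by omega) key
  · -- AEAA: parity
    have hh := mcArc_side h3
    rw [mcArc_side h2, mcAdj_side h1, mcArc_side h0] at hh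
    simp at hh
  · -- AAEE
    exact absurd (hinj (mcEdge_eq (mcAdj_symm h2) h3
      ((mcArc_line h1).trans (mcArc_line h0)))) (by decide)
  · -- AAEA: parity
    have hh := mcArc_side h3
    rw [mcAdj_side h2, mcArc_side h1, mcArc_side h0] at hh
    simp at hh
  · -- AAAE: parity
    have hh := mcAdj_side h3
    rw [mcArc_side h2, mcArc_side h1, mcArc_side h0] at hh
    simp at hh
  · -- AAAA
    obtain ⟨a0, ha0, ha0', e0⟩ := mcArc_pos h0
    obtain ⟨a1, ha1, ha1', e1⟩ := mcArc_pos h1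
    obtain ⟨a2, ha2, ha2', e2⟩ := mcArc_pos h2
    obtain ⟨a3, ha3, ha3', e3⟩ := mcArc_pos h3
    have key : ((a0 + a1 + a2 + a3 : ℕ) : ZMod p) = 0 := by
      push_cast
      linear_combination -e0 - e1 - e2 - e3
    exact castNZ (by omega) (by omega) key

lemma mc_cycle5 (hp : p.Prime) (hz : 1 ≤ z) (hr : 1 ≤ r)
    (h4 : 4 * z + 1 ≤ p) (h5 : p ≤ 5 * z) (hzp : z < p) :
    (mcM z hzp (r := r)).HasCycleOfLength 5 := by
  have h4' : 4 * z < p := by omega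
  refine ⟨by norm_num, fun i => (false, ((i.val * z : ℕ) : ZMod p), ⟨0, hr⟩),
    ?_, ?_⟩
  · intro i j hij
    have hx := congrArg (fun w : MCV p r => w.2.1) hij
    dsimp only at hx
    have hi : i.val * z < p := by
      have := i.val_lt
      have : i.val ≤ 4 := by omega
      nlinarith
    have hj : j.val * z < p := by
      have := j.val_lt
      have : j.val ≤ 4 := by omega
      nlinarith
    have := castInj hi hj hx
    have hv : i.val = j.val := Nat.eq_of_mul_eq_mul_right (by omega) this
    exact ZMod.val_injective 5 hv
  · intro i
    have hall : ∀ j : ZMod 5, j = 0 ∨ j = 1 ∨ j = 2 ∨ j = 3 ∨ j = 4 := by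
      decide
    have hcase := hall i
    have step_small : ∀ i : ZMod 5, i.val ≤ 3 → (i + 1).val = i.val + 1 := by
      decide
    rcases hcase with rfl | rfl | rfl | rfl | rfl
    · refine Or.inr ⟨⟨z - 1, by omega⟩, ?_⟩
      simp only [mcArcNbr, step_small 0 (by decide), Prod.mk.injEq]
      refine ⟨by trivial, ?_, by trivial⟩
      have hzz : z - 1 + 1 = z := by omega
      rw [hzz, show (0 : ZMod 5).val = 0 by decide]
      push_cast; ring
    · refine Or.inr ⟨⟨z - 1, by omega⟩, ?_⟩
      simp only [mcArcNbr, step_small 1 (by decide), Prod.mk.injEq]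
      refine ⟨by trivial, ?_, by trivial⟩
      have hzz : z - 1 + 1 = z := by omega
      rw [hzz, show (1 : ZMod 5).val = 1 by decide]
      push_cast; ring
    · refine Or.inr ⟨⟨z - 1, by omega⟩, ?_⟩
      simp only [mcArcNbr, step_small 2 (by decide), Prod.mk.injEq]
      refine ⟨by trivial, ?_, by trivial⟩
      have hzz : z - 1 + 1 = z := by omega
      rw [hzz, show (2 : ZMod 5).val = 2 by decide]
      push_cast; ring
    · refine Or.inr ⟨⟨z - 1, by omega⟩, ?_⟩
      simp only [mcArcNbr, step_small 3 (by decide), Prod.mk.injEq]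
      refine ⟨by trivial, ?_, by trivial⟩
      have hzz : z - 1 + 1 = z := by omega
      rw [hzz, show (3 : ZMod 5).val = 3 by decide]
      push_cast; ring
    · refine Or.inr ⟨⟨p - 4 * z - 1, by omega⟩, ?_⟩
      simp only [mcArcNbr, Prod.mk.injEq]
      refine ⟨by trivial, ?_, by trivial⟩
      rw [show ((4 : ZMod 5) + 1).val = 0 by decide,
        show (4 : ZMod 5).val = 4 by decide,
        show p - 4 * z - 1 + 1 = p - 4 * z by omega,
        ← Nat.cast_add, show 4 * z + (p - 4 * z) = p by omega,
        ZMod.natCast_self, show 0 * z = 0 by omega, Nat.cast_zero]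

lemma mc_outdeg (hzp : z < p) (v : MCV p r) :
    Nat.card {w // mcArc z v w} = z := by
  have e : Fin z ≃ {w // mcArc z v w} := by
    refine Equiv.ofBijective (fun k => ⟨mcArcNbr z v k, k, rfl⟩) ⟨?_, ?_⟩
    · intro k k' hkk
      have hx := congrArg (fun w : {w // mcArc z v w} => w.1.2.1) hkk
      dsimp only [mcArcNbr] at hx
      have : (((k : ℕ) + 1 : ℕ) : ZMod p) = (((k' : ℕ) + 1 : ℕ) : ZMod p) := by
        push_cast at hx ⊢
        linear_combination hx
      have := castInj (by have := k.isLt; omega) (by have := k'.isLt; omega) this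
      exact Fin.ext (by omega)
    · rintro ⟨w, k, hk⟩
      exact ⟨k, Subtype.ext hk.symm⟩
  rw [← Nat.card_congr e]
  simp [Nat.card_eq_fintype_card]

lemma mc_indeg (hzp : z < p) (v : MCV p r) :
    Nat.card {w // mcArc z w v} = z := by
  have e : Fin z ≃ {w // mcArc z w v} := by
    refine Equiv.ofBijective
      (fun k => ⟨(v.1, v.2.1 - (((k : ℕ) + 1 : ℕ) : ZMod p), v.2.2),
        ⟨k, ?_⟩⟩) ⟨?_, ?_⟩
    · refine Prod.ext rfl (Prod.ext ?_ rfl)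
      show v.2.1 = v.2.1 - (((k : ℕ) + 1 : ℕ) : ZMod p) + _
      ring
    · intro k k' hkk
      have hx := congrArg (fun w : {w // mcArc z w v} => w.1.2.1) hkk
      dsimp only at hx
      have : (((k : ℕ) + 1 : ℕ) : ZMod p) = (((k' : ℕ) + 1 : ℕ) : ZMod p) := by
        push_cast at hx ⊢
        linear_combination -hx
      have := castInj (by have := k.isLt; omega) (by have := k'.isLt; omega) this
      exact Fin.ext (by omega)
    · rintro ⟨w, k, hk⟩
      refine ⟨k, Subtype.ext ?_⟩
      obtain ⟨wb, wx, wi⟩ := w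
      have h1 := congrArg Prod.fst hk
      have h2 := congrArg (fun t : MCV p r => t.2.1) hk
      have h3 := congrArg (fun t : MCV p r => t.2.2) hk
      dsimp only [mcArcNbr] at h1 h2 h3
      refine Prod.ext h1 (Prod.ext ?_ h3)
      show v.2.1 - _ = wx
      rw [h2]; ring
  rw [← Nat.card_congr e]
  simp [Nat.card_eq_fintype_card]

lemma mc_edeg (v : MCV p r) : Nat.card {w // mcAdj v w} = r := by
  have e : Fin r ≃ {w // mcAdj v w} := by
    refine Equiv.ofBijective (fun j => ⟨mcNbr v j, ?_⟩) ⟨?_, ?_⟩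
    · cases hvb : v.1
      · exact Or.inl ⟨hvb, by simp [mcNbr, hvb], by simp [mcNbr, hvb]⟩
      · refine Or.inr ⟨hvb, by simp [mcNbr, hvb], ?_⟩
        simp only [mcNbr, hvb]
        norm_num
    · intro j j' hjj
      have hx := congrArg (fun w : {w // mcAdj v w} => w.1.2.2) hjj
      simp only [mcNbr] at hx
      split at hx <;> exact hx
    · rintro ⟨w, hw⟩
      refine ⟨w.2.2, Subtype.ext ?_⟩
      rcases hw with ⟨s1, s2, e1⟩ | ⟨s1, s2, e1⟩
      · simp only [mcNbr, s1, if_pos rfl]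
        exact Prod.ext s2.symm (Prod.ext e1.symm rfl)
      · have : ¬ (v.1 = false) := by rw [s1]; simp
        simp only [mcNbr, if_neg this]
        refine Prod.ext s2.symm (Prod.ext ?_ rfl)
        show v.2.1 - _ = w.2.1
        linear_combination e1
  rw [← Nat.card_congr e]
  simp [Nat.card_eq_fintype_card]

end MC

/-- Let `z ≠ 2` be a positive integer and `p` the smallest prime with
`4z + 1 ≤ p ≤ 5z`. Then for every `1 ≤ r ≤ p` there is a `[z,r;5]`-mixed
graph of order `2pr`; in particular `n[z,r;5] ≤ 2pr`. -/
theorem stmt_6 (z p : ℕ) (hz : 1 ≤ z) (hz2 : z ≠ 2) (hp : p.Prime)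
    (hlb : 4 * z + 1 ≤ p) (hub : p ≤ 5 * z)
    (hmin : ∀ q : ℕ, q.Prime → 4 * z + 1 ≤ q → q ≤ 5 * z → p ≤ q)
    (r : ℕ) (hr1 : 1 ≤ r) (hrp : r ≤ p) :
    (∃ M : MixedGraph (Fin (2 * p * r)), M.IsMixed z r 5) ∧
      mixedCageNum z r 5 ≤ 2 * p * r := by
  have hzp : z < p := by omega
  have h4' : 4 * z < p := by omega
  haveI : NeZero p := ⟨hp.pos.ne'⟩
  have hcard : Fintype.card (Fin (2 * p * r)) = Fintype.card (MCV p r) := by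
    simp [ZMod.card, mul_assoc]
  have e : Fin (2 * p * r) ≃ MCV p r := Fintype.equivOfCardEq hcard
  set M' : MixedGraph (Fin (2 * p * r)) :=
    { edge := ⟨fun a b => mcAdj (e a) (e b),
        ⟨fun _ _ h => mcAdj_symm h⟩,
        ⟨fun v h => mcAdj_irrefl (e v) h⟩⟩
      arc := fun a b => mcArc z (e a) (e b)
      arc_irrefl := fun v h => mcArc_irrefl hzp (e v) h
      no_overlap := fun u v h => (mcM z hzp).no_overlap (e u) (e v) h } with hM'
  have hmixed : M'.IsMixed z r 5 := by
    refine ⟨?_, ?_, ?_, ⟨?_, ?_⟩⟩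
    · intro v
      rw [Nat.card_congr (Equiv.subtypeEquiv
        (q := fun w => mcArc z (e v) w) e (fun w => Iff.rfl))]
      exact mc_outdeg hzp (e v)
    · intro v
      rw [Nat.card_congr (Equiv.subtypeEquiv
        (q := fun w => mcArc z w (e v)) e (fun w => Iff.rfl))]
      exact mc_indeg hzp (e v)
    · intro v
      rw [Nat.card_congr (Equiv.subtypeEquiv
        (q := fun w => mcAdj (e v) w) e (fun w => Iff.rfl))]
      exact mc_edeg (e v)
    · -- 5-cycle
      obtain ⟨h3, c, hinj, hstep⟩ := mc_cycle5 (r := r) hp hz hr1 hlb hub hzp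
      refine ⟨h3, fun i => e.symm (c i), e.symm.injective.comp hinj, ?_⟩
      intro i
      have := hstep i
      rcases this with h | h
      · exact Or.inl (by simpa [MixedGraph.Step, hM'] using
          (show mcAdj (e (e.symm (c i))) (e (e.symm (c (i + 1)))) by
            rw [e.apply_symm_apply, e.apply_symm_apply]; exact h))
      · exact Or.inr (by
          show mcArc z (e (e.symm (c i))) (e (e.symm (c (i + 1))))
          rw [e.apply_symm_apply, e.apply_symm_apply]; exact h)
    · -- no short cycles
      intro n hn
      by_contra hlt
      push_neg at hlt
      obtain ⟨hn3, c, hinj, hstep⟩ := hn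
      have hn34 : n = 3 ∨ n = 4 := by omega
      rcases hn34 with rfl | rfl
      · exact mc_no3 hp hz h4' hrp hzp (fun i => e (c i))
          (e.injective.comp hinj) (fun i => hstep i)
      · exact mc_no4 hp hz h4' hrp hzp (fun i => e (c i))
          (e.injective.comp hinj) (fun i => hstep i)
  exact ⟨⟨M', hmixed⟩, Nat.sInf_le ⟨M', hmixed⟩⟩
end

section
/- Let r ≥ 2 and g ≥ 3 be integers, and let H be an r-regular simple graph of girth g on n vertices. Then for every integer z' with 1 ≤ z' ≤ n there exists a [z',r;g]-mixed graph of order g·n; consequently n[z',r;g] ≤ g·n. -/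
/-! ### Auxiliary machinery -/

open SimpleGraph

/-- A walk realizing a stretch of a cyclic sequence of adjacent vertices. -/
def buildWalk {V : Type} {H : SimpleGraph V} (c : ℕ → V)
    (hadj : ∀ k, H.Adj (c k) (c (k + 1))) : (j k : ℕ) → H.Walk (c j) (c (j + k))
  | _, 0 => Walk.nil
  | j, k + 1 => Walk.cons (hadj j)
      ((buildWalk c hadj (j + 1) k).copy rfl (congrArg c (by omega)))

lemma buildWalk_length {V : Type} {H : SimpleGraph V} (c : ℕ → V)
    (hadj : ∀ k, H.Adj (c k) (c (k + 1))) (j k : ℕ) :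
    (buildWalk c hadj j k).length = k := by
  induction k generalizing j with
  | zero => rfl
  | succ k ih => simp [buildWalk, ih]

lemma buildWalk_support {V : Type} {H : SimpleGraph V} (c : ℕ → V)
    (hadj : ∀ k, H.Adj (c k) (c (k + 1))) (j k : ℕ) :
    (buildWalk c hadj j k).support = (List.range (k + 1)).map (fun t => c (j + t)) := by
  induction k generalizing j with
  | zero => simp [buildWalk, List.range_succ]
  | succ k ih =>
      simp only [buildWalk, Walk.support_cons, Walk.support_copy, ih,
        List.range_succ_eq_map, List.map_cons, List.map_map]
      have hfun : ((fun t => c (j + 1 + t)) ∘ Nat.succ)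
          = ((fun t => c (j + t)) ∘ Nat.succ ∘ Nat.succ) := by
        funext t
        simp only [Function.comp_apply]
        exact congrArg c (by omega)
      rw [hfun]
      rfl

lemma buildWalk_edges {V : Type} {H : SimpleGraph V} (c : ℕ → V)
    (hadj : ∀ k, H.Adj (c k) (c (k + 1))) (j k : ℕ) :
    (buildWalk c hadj j k).edges
      = (List.range k).map (fun t => s(c (j + t), c (j + t + 1))) := by
  induction k generalizing j with
  | zero => simp [buildWalk]
  | succ k ih =>
      simp only [buildWalk, Walk.edges_cons, Walk.edges_copy, ih,
        List.range_succ_eq_map, List.map_cons, List.map_map]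
      have hfun : (fun t => s(c (j + 1 + t), c (j + 1 + t + 1)))
          = ((fun t => s(c (j + t), c (j + t + 1))) ∘ Nat.succ) := by
        funext t
        simp only [Function.comp_apply]
        exact congrArg₂ (fun a b => s(a, b)) (congrArg c (by omega)) (congrArg c (by omega))
      rw [hfun]
      rfl

/-- A cyclic sequence of `m ≥ 3` distinct pairwise-adjacent vertices yields a
cycle (in the walk sense) of length `m`. -/
lemma exists_cycle_of_cyclic {V : Type} {H : SimpleGraph V} {m : ℕ} (hm : 3 ≤ m)
    (c : ZMod m → V) (hinj : Function.Injective c)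
    (hadj : ∀ i, H.Adj (c i) (c (i + 1))) :
    ∃ (a : V) (w : H.Walk a a), w.IsCycle ∧ w.length = m := by
  haveI : NeZero m := ⟨by omega⟩
  set cN : ℕ → V := fun k => c (k : ZMod m) with hcN
  have hN : ∀ k, H.Adj (cN k) (cN (k + 1)) := by
    intro k
    have := hadj (k : ZMod m)
    simpa [hcN, Nat.cast_add, Nat.cast_one] using this
  have key : ∀ a b : ℕ, a < m → b < m → cN a = cN b → a = b := by
    intro a b ha hb h
    have h2 := congrArg ZMod.val (hinj h)
    rwa [ZMod.val_cast_of_lt ha, ZMod.val_cast_of_lt hb] at h2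
  have hend : cN (1 + (m - 1)) = cN 0 := by
    have : ((1 + (m - 1) : ℕ) : ZMod m) = ((0 : ℕ) : ZMod m) := by
      rw [show 1 + (m - 1) = m by omega]
      simp [ZMod.natCast_self]
    exact congrArg c this
  set p : H.Walk (cN 1) (cN 0) := (buildWalk cN hN 1 (m - 1)).copy rfl hend with hp
  refine ⟨cN 0, Walk.cons (hN 0) p, ?_, ?_⟩
  · rw [Walk.cons_isCycle_iff]
    constructor
    · apply Walk.IsPath.mk'
      rw [hp, Walk.support_copy, buildWalk_support]
      rw [show m - 1 + 1 = m by omega]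
      refine List.Nodup.map_on ?_ (List.nodup_range (n := m))
      intro t ht t' ht' h
      rw [List.mem_range] at ht ht'
      have h2 := hinj h
      rw [Nat.cast_add, Nat.cast_add] at h2
      have h3 := add_left_cancel h2
      have := congrArg ZMod.val h3
      rwa [ZMod.val_cast_of_lt ht, ZMod.val_cast_of_lt ht'] at this
    · intro hmem
      rw [hp, Walk.edges_copy, buildWalk_edges] at hmem
      obtain ⟨t, htmem, heq⟩ := List.mem_map.mp hmem
      rw [List.mem_range] at htmem
      rw [Sym2.eq_iff] at heq
      rcases heq with ⟨h1, _⟩ | ⟨h1, h2⟩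
      · exact absurd (key _ _ (by omega) (by omega) h1) (by omega)
      · have ht0 : 1 + t = 1 := key _ _ (by omega) (by omega) h1
        have : 1 + t + 1 = 0 := key _ _ (by omega) (by omega) h2
        omega
  · rw [Walk.length_cons, hp, Walk.length_copy, buildWalk_length]
    omega

/-- Transporting a mixed graph along a bijection of vertex sets. -/
def MixedGraph.relabel {V W : Type} (e : V ≃ W) (M : MixedGraph V) : MixedGraph W where
  edge := { Adj := fun a b => M.edge.Adj (e.symm a) (e.symm b)
            symm := ⟨fun _ _ h => M.edge.adj_symm h⟩
            loopless := ⟨fun _ h => M.edge.irrefl h⟩ }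
  arc a b := M.arc (e.symm a) (e.symm b)
  arc_irrefl _ := M.arc_irrefl _
  no_overlap _ _ h := M.no_overlap _ _ h

lemma MixedGraph.relabel_hasCycle {V W : Type} (e : V ≃ W) (M : MixedGraph V) (n : ℕ) :
    (M.relabel e).HasCycleOfLength n ↔ M.HasCycleOfLength n := by
  constructor
  · rintro ⟨hn, c, hinj, hstep⟩
    exact ⟨hn, e.symm ∘ c, e.symm.injective.comp hinj, fun i => hstep i⟩
  · rintro ⟨hn, c, hinj, hstep⟩
    refine ⟨hn, e ∘ c, e.injective.comp hinj, fun i => ?_⟩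
    rcases hstep i with h | h
    · exact Or.inl (by simpa [MixedGraph.relabel] using h)
    · exact Or.inr (by simpa [MixedGraph.relabel] using h)

lemma MixedGraph.relabel_isMixed {V W : Type} (e : V ≃ W) (M : MixedGraph V) (z r g : ℕ)
    (h : M.IsMixed z r g) : (M.relabel e).IsMixed z r g := by
  obtain ⟨h1, h2, h3, hcyc, hmin⟩ := h
  refine ⟨fun v => ?_, fun v => ?_, fun v => ?_,
    (relabel_hasCycle e M g).mpr hcyc,
    fun n hn => hmin n ((relabel_hasCycle e M n).mp hn)⟩
  · rw [← h1 (e.symm v)]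
    exact Nat.card_congr (Equiv.subtypeEquiv e.symm (fun w => Iff.rfl))
  · rw [← h2 (e.symm v)]
    exact Nat.card_congr (Equiv.subtypeEquiv e.symm (fun w => Iff.rfl))
  · rw [← h3 (e.symm v)]
    exact Nat.card_congr (Equiv.subtypeEquiv e.symm (fun w => Iff.rfl))

def layerEquiv {g : ℕ} {V : Type} (j : ZMod g) (P : V → Prop) :
    {w : ZMod g × V // w.1 = j ∧ P w.2} ≃ {v : V // P v} where
  toFun w := ⟨w.1.2, w.2.2⟩
  invFun v := ⟨(j, v.1), rfl, v.2⟩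
  left_inv w := Subtype.ext (by obtain ⟨⟨a, b⟩, h1, h2⟩ := w; simp at h1 ⊢; exact h1.symm)
  right_inv v := rfl

def zmodValEquiv (n z' : ℕ) [NeZero n] (hz : z' ≤ n) : {k : ZMod n // k.val < z'} ≃ Fin z' where
  toFun k := ⟨k.1.val, k.2⟩
  invFun j := ⟨((j : ℕ) : ZMod n), by
    rw [ZMod.val_cast_of_lt (lt_of_lt_of_le j.2 hz)]; exact j.2⟩
  left_inv k := Subtype.ext (by simp [ZMod.natCast_val, ZMod.cast_id])
  right_inv j := Fin.ext (ZMod.val_cast_of_lt (lt_of_lt_of_le j.2 hz))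

/-- The layered construction: `g` copies of `H`, with `z'` disjoint perfect
matchings oriented from copy `i` to copy `i+1`. -/
def mixedProd {V : Type} (g n z' : ℕ) (H : SimpleGraph V) (e : V ≃ ZMod n)
    (hg : 3 ≤ g) : MixedGraph (ZMod g × V) where
  edge := { Adj := fun a b => a.1 = b.1 ∧ H.Adj a.2 b.2
            symm := ⟨fun a b h => ⟨h.1.symm, h.2.symm⟩⟩
            loopless := ⟨fun a h => H.irrefl h.2⟩ }
  arc a b := b.1 = a.1 + 1 ∧ (e b.2 - e a.2).val < z'
  arc_irrefl v h := by
    haveI : Fact (1 < g) := ⟨by omega⟩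
    exact one_ne_zero (left_eq_add.mp h.1)
  no_overlap u v h := by
    haveI : Fact (1 < g) := ⟨by omega⟩
    constructor
    · rintro ⟨ha, -⟩
      exact one_ne_zero (left_eq_add.mp (h.1.trans ha))
    · rintro ⟨ha, -⟩
      exact one_ne_zero (left_eq_add.mp (h.1.symm.trans ha))

/-- If `H` is an `r`-regular simple graph of girth `g` on `n` vertices, then
for every `1 ≤ z' ≤ n` there is a `[z',r;g]`-mixed graph of order `g·n`;
consequently `n[z',r;g] ≤ g·n`. -/
theorem stmt_7 {V : Type} [Fintype V] (r g : ℕ) (hr : 2 ≤ r) (hg : 3 ≤ g)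
    (H : SimpleGraph V)
    (hreg : ∀ v : V, Nat.card (H.neighborSet v) = r)
    (hgirth : H.girth = (g : ℕ∞))
    (z' : ℕ) (hz'1 : 1 ≤ z') (hz'n : z' ≤ Fintype.card V) :
    (∃ M : MixedGraph (Fin (g * Fintype.card V)), M.IsMixed z' r g) ∧
      mixedCageNum z' r g ≤ g * Fintype.card V := by
  -- setup
  have hn1 : 1 ≤ Fintype.card V := le_trans hz'1 hz'n
  have hV : Nonempty V := Fintype.card_pos_iff.mp (by omega)
  haveI : NeZero (Fintype.card V) := ⟨by omega⟩
  haveI : NeZero g := ⟨by omega⟩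
  set n := Fintype.card V with hndef
  let e : V ≃ ZMod n := Fintype.equivOfCardEq (by simp [ZMod.card, hndef])
  -- girth facts about H
  have hgn : H.girth = g := by exact_mod_cast hgirth
  have hac : ¬ H.IsAcyclic := by
    intro h
    rw [h.girth_eq_zero] at hgn
    omega
  have hegirth : H.egirth = (g : ℕ∞) := by
    have hne : H.egirth ≠ ⊤ := SimpleGraph.egirth_eq_top.not.mpr hac
    rw [← hgn]
    exact (ENat.coe_toNat hne).symm
  have cycbound : ∀ m : ℕ, 3 ≤ m → ∀ c : ZMod m → V, Function.Injective c →
      (∀ i, H.Adj (c i) (c (i + 1))) → g ≤ m := by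
    intro m hm c hinj hadj
    obtain ⟨a, w, hw, hlen⟩ := exists_cycle_of_cyclic hm c hinj hadj
    have := SimpleGraph.le_egirth.mp hegirth.ge a w hw
    rw [hlen] at this
    exact_mod_cast this
  -- the layered mixed graph
  set M0 := mixedProd g n z' H e hg with hM0def
  -- out-degrees
  have hout : ∀ v : ZMod g × V, Nat.card {w // M0.arc v w} = z' := by
    rintro ⟨i, u⟩
    show Nat.card {w : ZMod g × V // w.1 = i + 1 ∧ (e w.2 - e u).val < z'} = z'
    refine Nat.card_eq_of_equiv_fin ?_
    exact (layerEquiv (i + 1) _).trans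
      ((Equiv.subtypeEquiv e (fun v => Iff.rfl)).trans
        ((Equiv.subtypeEquiv (Equiv.subRight (e u)) (fun k => Iff.rfl)).trans
          (zmodValEquiv n z' hz'n)))
  -- in-degrees
  have hin : ∀ v : ZMod g × V, Nat.card {w // M0.arc w v} = z' := by
    rintro ⟨i, u⟩
    show Nat.card {w : ZMod g × V // i = w.1 + 1 ∧ (e u - e w.2).val < z'} = z'
    refine Nat.card_eq_of_equiv_fin ?_
    refine (Equiv.subtypeEquivRight (fun w => ?_)).trans
      ((layerEquiv (i - 1) (fun v : V => (e u - e v).val < z')).trans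
        ((Equiv.subtypeEquiv e (fun v => Iff.rfl)).trans
          ((Equiv.subtypeEquiv (Equiv.subLeft (e u)) (fun k => Iff.rfl)).trans
            (zmodValEquiv n z' hz'n))))
    constructor
    · rintro ⟨h1, h2⟩
      exact ⟨by rw [eq_sub_iff_add_eq]; exact h1.symm, h2⟩
    · rintro ⟨h1, h2⟩
      exact ⟨(eq_sub_iff_add_eq.mp h1).symm, h2⟩
  -- degrees in the undirected part
  have hdeg : ∀ v : ZMod g × V, Nat.card {w // M0.edge.Adj v w} = r := by
    rintro ⟨i, u⟩
    show Nat.card {w : ZMod g × V // i = w.1 ∧ H.Adj u w.2} = r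
    rw [← hreg u]
    refine Nat.card_congr ?_
    exact ((Equiv.subtypeEquivRight (fun w => by rw [eq_comm])).trans
      (layerEquiv i (fun v : V => H.Adj u v))).trans
        (Equiv.subtypeEquivRight (fun v => Iff.rfl))
  -- existence of a cycle of length g
  have hcyc : M0.HasCycleOfLength g := by
    obtain ⟨v0⟩ := hV
    refine ⟨hg, fun i => (i, v0), fun a b hab => congrArg Prod.fst hab, fun i => ?_⟩
    refine Or.inr ⟨rfl, ?_⟩
    simp only [sub_self, ZMod.val_zero]
    omega
  -- no shorter cycle
  have lower : ∀ m, M0.HasCycleOfLength m → g ≤ m := by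
    rintro m ⟨hm3, c, hinj, hstep⟩
    haveI : NeZero m := ⟨by omega⟩
    set f : ZMod m → ZMod g := fun i => (c i).1 with hf
    set D : ZMod m → ℕ := fun i => if f (i + 1) = f i + 1 then 1 else 0 with hD
    have hstep' : ∀ i, (f (i + 1) = f i ∧ H.Adj (c i).2 (c (i + 1)).2)
        ∨ f (i + 1) = f i + 1 := by
      intro i
      rcases hstep i with h | h
      · exact Or.inl ⟨h.1.symm, h.2⟩
      · exact Or.inr h.1
    haveI : Fact (1 < g) := ⟨by omega⟩
    have hcast : ((∑ i : ZMod m, D i : ℕ) : ZMod g) = 0 := by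
      push_cast
      have h1 : ∀ i ∈ Finset.univ, ((D i : ℕ) : ZMod g) = f (i + 1) - f i := by
        intro i _
        rcases hstep' i with h | h
        · have hne : f (i + 1) ≠ f i + 1 := by
            rw [h.1]
            intro hcon
            exact one_ne_zero (left_eq_add.mp hcon)
          simp [hD, hne, h.1]
        · simp [hD, h]
      rw [Finset.sum_congr rfl h1, Finset.sum_sub_distrib, sub_eq_zero]
      exact Fintype.sum_equiv (Equiv.addRight (1 : ZMod m)) _ _ (fun i => rfl)
    have hdvd : g ∣ ∑ i : ZMod m, D i :=
      (ZMod.natCast_eq_zero_iff _ _).mp hcast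
    by_cases hS : ∑ i : ZMod m, D i = 0
    · have hedge : ∀ i, f (i + 1) = f i ∧ H.Adj (c i).2 (c (i + 1)).2 := by
        intro i
        rcases hstep' i with h | h
        · exact h
        · exfalso
          have := Finset.sum_eq_zero_iff.mp hS i (Finset.mem_univ i)
          simp [hD, h] at this
      have hconstN : ∀ k : ℕ, f ((k : ℕ) : ZMod m) = f 0 := by
        intro k
        induction k with
        | zero => norm_num
        | succ k ih =>
            have hcst : ((k + 1 : ℕ) : ZMod m) = ((k : ℕ) : ZMod m) + 1 := by push_cast; ring
            rw [hcst, (hedge _).1, ih]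
      have hconst : ∀ i : ZMod m, f i = f 0 := by
        intro i
        have hval : ((i.val : ℕ) : ZMod m) = i := by
          simp [ZMod.natCast_val, ZMod.cast_id]
        rw [← hval]
        exact hconstN i.val
      have hinj2 : Function.Injective (fun i : ZMod m => (c i).2) := by
        intro a b hab
        apply hinj
        have h1 : (c a).1 = (c b).1 := (hconst a).trans (hconst b).symm
        exact Prod.ext h1 hab
      exact cycbound m hm3 _ hinj2 (fun i => (hedge i).2)
    · have hpos : 0 < ∑ i : ZMod m, D i := Nat.pos_of_ne_zero hS
      have hge : g ≤ ∑ i : ZMod m, D i := Nat.le_of_dvd hpos hdvd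
      have hle : ∑ i : ZMod m, D i ≤ m := by
        calc ∑ i : ZMod m, D i ≤ ∑ _i : ZMod m, 1 :=
              Finset.sum_le_sum (fun i _ => by simp only [hD]; split <;> omega)
          _ = m := by simp [ZMod.card]
      omega
  have hM0 : M0.IsMixed z' r g := ⟨hout, hin, hdeg, hcyc, lower⟩
  let eqF : (ZMod g × V) ≃ Fin (g * Fintype.card V) :=
    Fintype.equivFinOfCardEq (by simp [ZMod.card])
  have hM : (M0.relabel eqF).IsMixed z' r g := MixedGraph.relabel_isMixed eqF M0 z' r g hM0
  exact ⟨⟨M0.relabel eqF, hM⟩, Nat.sInf_le ⟨M0.relabel eqF, hM⟩⟩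
end

section
/- Let F be a finite field with q = |F| ≥ 3. Let B_q be the bipartite graph whose vertex set is the disjoint union of a set of points P = F × F and a set of lines L = F × F, where a point (x,y) is adjacent to a line (m,b) if and only if y = m·x + b. Then B_q is q-regular, has 2q² vertices, and has girth 6. -/
/-- The incidence graph of the biaffine plane over a field `F`: points are
pairs `(x, y)` (the left summand), lines are pairs `(m, b)` (the right
summand), and a point is adjacent to a line iff `y = m * x + b`. -/
def biaffine (F : Type) [Field F] : SimpleGraph ((F × F) ⊕ (F × F)) where
  Adj u v :=
    (∃ x y m b : F, u = Sum.inl (x, y) ∧ v = Sum.inr (m, b) ∧ y = m * x + b) ∨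
    (∃ x y m b : F, u = Sum.inr (m, b) ∧ v = Sum.inl (x, y) ∧ y = m * x + b)
  symm := by
    constructor
    intro u v h
    rcases h with ⟨x, y, m, b, hu, hv, hxy⟩ | ⟨x, y, m, b, hu, hv, hxy⟩
    · exact Or.inr ⟨x, y, m, b, hv, hu, hxy⟩
    · exact Or.inl ⟨x, y, m, b, hv, hu, hxy⟩
  loopless := by
    constructor
    intro u h
    rcases h with ⟨x, y, m, b, hu, hv, _⟩ | ⟨x, y, m, b, hu, hv, _⟩ <;>
      simp [hu] at hv

variable {F : Type} [Field F]

lemma biaffine_adj_inl {x y : F} {v} (h : (biaffine F).Adj (Sum.inl (x, y)) v) :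
    ∃ m b : F, v = Sum.inr (m, b) ∧ y = m * x + b := by
  rcases h with ⟨x', y', m, b, hu, hv, he⟩ | ⟨x', y', m, b, hu, hv, he⟩
  · obtain ⟨rfl, rfl⟩ : x' = x ∧ y' = y := by simpa [Prod.ext_iff, eq_comm] using hu
    exact ⟨m, b, hv, he⟩
  · simp at hu

lemma biaffine_adj_inr {m b : F} {v} (h : (biaffine F).Adj (Sum.inr (m, b)) v) :
    ∃ x y : F, v = Sum.inl (x, y) ∧ y = m * x + b := by
  rcases h with ⟨x', y', m', b', hu, hv, he⟩ | ⟨x', y', m', b', hu, hv, he⟩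
  · simp at hu
  · obtain ⟨rfl, rfl⟩ : m' = m ∧ b' = b := by simpa [Prod.ext_iff, eq_comm] using hu
    exact ⟨x', y', hv, he⟩

lemma biaffine_side {u v} (h : (biaffine F).Adj u v) : u.isLeft = !v.isLeft := by
  rcases h with ⟨x, y, m, b, hu, hv, _⟩ | ⟨x, y, m, b, hu, hv, _⟩ <;> subst hu <;> subst hv <;> simp

lemma biaffine_parity {u v} (w : (biaffine F).Walk u v) :
    (u.isLeft = v.isLeft ↔ Even w.length) := by
  induction w with
  | nil => simp
  | @cons a b c h p ih =>
    rw [SimpleGraph.Walk.length_cons, Nat.even_add_one, ← ih, biaffine_side h]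
    cases b.isLeft <;> cases c.isLeft <;> simp

lemma biaffine_no4 (x y : F) {b c d} (h1 : (biaffine F).Adj (Sum.inl (x, y)) b)
    (h2 : (biaffine F).Adj b c) (h3 : (biaffine F).Adj c d)
    (h4 : (biaffine F).Adj d (Sum.inl (x, y)))
    (hac : Sum.inl (x, y) ≠ c) (hbd : b ≠ d) : False := by
  obtain ⟨m1, b1, rfl, e1⟩ := biaffine_adj_inl h1
  obtain ⟨x2, y2, rfl, e2⟩ := biaffine_adj_inr h2
  obtain ⟨m2, b2, rfl, e3⟩ := biaffine_adj_inl h3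
  obtain ⟨x', y', he, e4⟩ := biaffine_adj_inr h4
  rw [Sum.inl.injEq, Prod.mk.injEq] at he
  obtain ⟨rfl, rfl⟩ := he
  by_cases hm : m1 = m2
  · subst hm
    have : b1 = b2 := by linear_combination e4 - e1
    simp [this] at hbd
  · have hx : x = x2 := by
      have h5 : (m1 - m2) * x = b2 - b1 := by linear_combination e4 - e1
      have h6 : (m1 - m2) * x2 = b2 - b1 := by linear_combination e3 - e2
      have := sub_ne_zero.mpr hm
      field_simp at h5 h6
      exact mul_left_cancel₀ this (h5.trans h6.symm)
    subst hx
    have : y = y2 := by linear_combination e1 - e2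
    simp [this] at hac

lemma nbhd_inl (x y : F) : (biaffine F).neighborSet (Sum.inl (x, y)) =
    Set.range (fun m : F => (Sum.inr (m, y - m * x) : (F × F) ⊕ (F × F))) := by
  ext v
  constructor
  · intro h
    obtain ⟨m, b, rfl, he⟩ := biaffine_adj_inl h
    refine ⟨m, ?_⟩
    simp only [he]
    congr 1
    exact congrArg _ (by ring)
  · rintro ⟨m, rfl⟩
    exact Or.inl ⟨x, y, m, y - m * x, rfl, rfl, by ring⟩

lemma nbhd_inr (m b : F) : (biaffine F).neighborSet (Sum.inr (m, b)) =
    Set.range (fun x : F => (Sum.inl (x, m * x + b) : (F × F) ⊕ (F × F))) := by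
  ext v
  constructor
  · intro h
    obtain ⟨x, y, rfl, he⟩ := biaffine_adj_inr h
    exact ⟨x, by rw [he]⟩
  · rintro ⟨x, rfl⟩
    exact Or.inr ⟨x, m * x + b, m, b, rfl, rfl, rfl⟩

lemma six_le_egirth : (6 : ℕ∞) ≤ (biaffine F).egirth := by
  rw [SimpleGraph.le_egirth]
  intro a w hw
  have h3 := hw.three_le_length
  have hev : Even w.length := (biaffine_parity w).mp rfl
  by_contra hlt
  push_neg at hlt
  have hlen : w.length = 4 := by
    have h6 : w.length < 6 := by exact_mod_cast hlt
    obtain ⟨k, hk⟩ := hev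
    omega
  clear hlt hev h3
  cases w with
  | nil => simp at hlen
  | @cons _ b _ h1 w1 =>
  cases w1 with
  | nil => simp at hlen
  | @cons _ c _ h2 w2 =>
  cases w2 with
  | nil => simp at hlen
  | @cons _ d _ h3 w3 =>
  cases w3 with
  | nil => simp at hlen
  | @cons _ e _ h4 w4 =>
  cases w4 with
  | @cons _ f _ h5 w5 => simp [SimpleGraph.Walk.length_cons] at hlen
  | nil =>
    have hnd := hw.support_nodup
    simp [SimpleGraph.Walk.support_cons, List.nodup_cons] at hnd
    obtain ⟨⟨hbc, hbd, hba⟩, ⟨hcd, hca⟩, hda⟩ := hnd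
    have h1' := h1
    rcases h1' with ⟨x, y, m, bb, ha, hb, he⟩ | ⟨x, y, m, bb, ha, hb, he⟩
    · subst ha
      exact biaffine_no4 x y h1 h2 h3 h4 (fun h => hca h.symm) hbd
    · subst hb
      exact biaffine_no4 x y h2 h3 h4 h1 hbd (fun h => hca h)

lemma egirth_le_six (a : F) (ha0 : a ≠ 0) (ha1 : a ≠ 1) :
    (biaffine F).egirth ≤ 6 := by
  have hu : (1 : F) - a ≠ 0 := sub_ne_zero.mpr (Ne.symm ha1)
  set u : F := 1 - a with hudef
  have e1 : (biaffine F).Adj (Sum.inl (0, 0)) (Sum.inr (0, 0)) :=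
    Or.inl ⟨0, 0, 0, 0, rfl, rfl, by ring⟩
  have e2 : (biaffine F).Adj (Sum.inr (0, 0)) (Sum.inl (1, 0)) :=
    Or.inr ⟨1, 0, 0, 0, rfl, rfl, by ring⟩
  have e3 : (biaffine F).Adj (Sum.inl (1, 0)) (Sum.inr (1, -1)) :=
    Or.inl ⟨1, 0, 1, -1, rfl, rfl, by ring⟩
  have e4 : (biaffine F).Adj (Sum.inr (1, -1)) (Sum.inl (u⁻¹, a * u⁻¹)) :=
    Or.inr ⟨u⁻¹, a * u⁻¹, 1, -1, rfl, rfl, by field_simp [hudef]; linear_combination hudef⟩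
  have e5 : (biaffine F).Adj (Sum.inl (u⁻¹, a * u⁻¹)) (Sum.inr (a, 0)) :=
    Or.inl ⟨u⁻¹, a * u⁻¹, a, 0, rfl, rfl, by ring⟩
  have e6 : (biaffine F).Adj (Sum.inr (a, 0)) (Sum.inl (0, 0)) :=
    Or.inr ⟨0, 0, a, 0, rfl, rfl, by ring⟩
  let W : (biaffine F).Walk (Sum.inl (0, 0)) (Sum.inl (0, 0)) :=
    .cons e1 (.cons e2 (.cons e3 (.cons e4 (.cons e5 (.cons e6 .nil)))))
  have hui : u⁻¹ ≠ 0 := inv_ne_zero hu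
  have hau : a * u⁻¹ ≠ 0 := mul_ne_zero ha0 hui
  have hu1 : u⁻¹ ≠ 1 := by
    intro h
    apply ha0
    have h2 : u = 1 := by rw [← inv_inv u, h, inv_one]
    rw [hudef] at h2
    linear_combination -h2
  have hm1 : (-1 : F) ≠ 0 := neg_ne_zero.mpr one_ne_zero
  have hcyc : W.IsCycle := by
    have facts := And.intro ha0 (And.intro ha1 (And.intro hui (And.intro hau hu1)))
    constructor
    · constructor
      · constructor
        simp [W, SimpleGraph.Walk.edges_cons, Sym2.eq_iff, Prod.ext_iff, hau, hui, ha0, ha1, hu1, hm1, Ne.symm hau, Ne.symm hui, Ne.symm ha0, Ne.symm ha1, Ne.symm hu1, Ne.symm hm1, zero_ne_one, one_ne_zero]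
      · simp [W]
    · simp [W, SimpleGraph.Walk.support_cons, List.nodup_cons, Prod.ext_iff, hau, hui, ha0, ha1, hu1, hm1, Ne.symm hau, Ne.symm hui, Ne.symm ha0, Ne.symm ha1, Ne.symm hu1, Ne.symm hm1, zero_ne_one, one_ne_zero]
  have hlen : W.length = 6 := by simp [W]
  by_contra hle
  push_neg at hle
  have h7 : (7 : ℕ∞) ≤ (biaffine F).egirth := Order.add_one_le_of_lt hle
  have := SimpleGraph.le_egirth.mp h7 _ W hcyc
  rw [hlen] at this
  exact absurd this (by decide)

/-- For a finite field `F` of order `q ≥ 3`, the biaffine incidence graph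
`B_q` is `q`-regular, has `2q²` vertices, and has girth 6. -/
theorem stmt_11 (F : Type) [Field F] [Fintype F] (hq : 3 ≤ Fintype.card F) :
    (∀ v, Nat.card ((biaffine F).neighborSet v) = Fintype.card F) ∧
    Nat.card ((F × F) ⊕ (F × F)) = 2 * Fintype.card F ^ 2 ∧
    (biaffine F).girth = (6 : ℕ∞) := by
  refine ⟨?_, ?_, ?_⟩
  · intro v
    obtain (⟨x, y⟩ | ⟨m, b⟩) := v
    · rw [nbhd_inl, Nat.card_range_of_injective, Nat.card_eq_fintype_card]
      intro a b hab
      simp only [Sum.inr.injEq, Prod.mk.injEq] at hab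
      exact hab.1
    · rw [nbhd_inr, Nat.card_range_of_injective, Nat.card_eq_fintype_card]
      intro a b hab
      simp only [Sum.inl.injEq, Prod.mk.injEq] at hab
      exact hab.1
  · simp [Nat.card_eq_fintype_card, Fintype.card_sum, Fintype.card_prod]
    ring
  · have hex : ∃ a : F, a ≠ 0 ∧ a ≠ 1 := by
      classical
      by_contra hno
      push_neg at hno
      have hsub : (Finset.univ : Finset F) ⊆ {0, 1} := by
        intro a _
        simp only [Finset.mem_insert, Finset.mem_singleton]
        by_cases h0 : a = 0
        · exact Or.inl h0
        · exact Or.inr (hno a h0)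
      have hle := Finset.card_le_card hsub
      have h2 : ({0, 1} : Finset F).card ≤ 2 := by
        apply le_trans (Finset.card_insert_le 0 {1})
        simp
      rw [Finset.card_univ] at hle
      omega
    obtain ⟨a, ha0, ha1⟩ := hex
    have heg : (biaffine F).egirth = 6 :=
      le_antisymm (egirth_le_six a ha0 ha1) six_le_egirth
    simp [SimpleGraph.girth, heg]
end
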